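/- Let A be a finite ring and γ₁,…,γ_d ∈ A pairwise commuting elements with γᵢ - γⱼ ∈ A^× for i ≠ j. If f ∈ A[X] has degree < d and the right evaluation (γᵢ)f = 0 for all i = 1,…,d, then f = 0. -/
import Mathlib


open Polynomial

/-- Right evaluation of a polynomial over a possibly noncommutative ring:
`(a)f = ∑ aⁱ fᵢ`. -/
noncomputable def rightEval {A : Type*} [Semiring A] (f : Polynomial A) (a : A) : A :=
  f.sum fun e c => a ^ e * c

section aux
variable {A : Type*} [Ring A]

lemma rightEval_monomial (n : ℕ) (c a : A) : rightEval (monomial n c) a = a ^ n * c := by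
  simp [rightEval, Polynomial.sum_monomial_index]

lemma rightEval_C (c a : A) : rightEval (C c) a = c := by
  simpa using rightEval_monomial 0 c a

lemma rightEval_add (f g : A[X]) (a : A) :
    rightEval (f + g) a = rightEval f a + rightEval g a := by
  simp [rightEval, Polynomial.sum_add_index, mul_add]

lemma rightEval_zero (a : A) : rightEval (0 : A[X]) a = 0 := by simp [rightEval]

lemma rightEval_sub (f g : A[X]) (a : A) :
    rightEval (f - g) a = rightEval f a - rightEval g a := by
  have h := rightEval_add (f - g) g a
  rw [sub_add_cancel] at h
  rw [h]; abel

lemma rightEval_X_mul (p : A[X]) (a : A) : rightEval (X * p) a = a * rightEval p a := by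
  induction p using Polynomial.induction_on' with
  | add f g hf hg => rw [mul_add, rightEval_add, hf, hg, rightEval_add, mul_add]
  | monomial n c => rw [X_mul_monomial, rightEval_monomial, rightEval_monomial,
      pow_succ', mul_assoc]

lemma rightEval_X_sub_C_mul {a b : A} (hab : a * b = b * a) (q : A[X]) :
    rightEval ((X - C a) * q) b = (b - a) * rightEval q b := by
  induction q using Polynomial.induction_on' with
  | add f g hf hg => rw [mul_add, rightEval_add, hf, hg, rightEval_add, mul_add]
  | monomial n c =>
      have hba : Commute b a := hab.symm
      have hpow : b ^ n * a = a * b ^ n := (hba.pow_left n).eq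
      rw [sub_mul, X_mul_monomial, C_mul_monomial, rightEval_sub, rightEval_monomial,
        rightEval_monomial, rightEval_monomial, sub_mul]
      congr 1
      · rw [pow_succ', mul_assoc]
      · rw [← mul_assoc, hpow, mul_assoc]

lemma bot_lt_natCast (n : ℕ) : (⊥ : WithBot ℕ) < (n : WithBot ℕ) := by
  exact_mod_cast WithBot.bot_lt_coe n

lemma rightDiv (a : A) : ∀ n : ℕ, ∀ f : A[X], f.degree < ((n + 1 : ℕ) : WithBot ℕ) →
    ∃ q : A[X], q.degree < (n : WithBot ℕ) ∧ f = (X - C a) * q + C (rightEval f a) := by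
  rcases subsingleton_or_nontrivial A with hs | hn
  · exact fun n f _ => ⟨0, by rw [degree_zero]; exact bot_lt_natCast n, Subsingleton.elim _ _⟩
  intro n
  induction n with
  | zero =>
      intro f hf
      have h0 : f.degree ≤ 0 := by
        rw [← Nat.WithBot.lt_one_iff_le_zero]; exact_mod_cast hf
      have hc := Polynomial.degree_le_zero_iff.mp h0
      refine ⟨0, by rw [degree_zero]; exact bot_lt_natCast 0, ?_⟩
      conv_lhs => rw [hc]
      rw [hc, rightEval_C]; simp
  | succ n ih =>
      intro f hf
      rcases eq_or_ne f 0 with rfl | hf0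
      · exact ⟨0, by rw [degree_zero]; exact bot_lt_natCast _, by simp [rightEval_zero]⟩
      have hg : f.divX.degree < ((n + 1 : ℕ) : WithBot ℕ) := by
        have h1 : f.divX.degree < f.degree := degree_divX_lt hf0
        have h2 : f.degree ≤ ((n + 1 : ℕ) : WithBot ℕ) := by
          have h3 := hf
          rw [Nat.cast_add, Nat.cast_one] at h3
          rw [Nat.cast_add, Nat.cast_one]
          exact Order.lt_succ_iff.mp h3
        exact lt_of_lt_of_le h1 h2
      obtain ⟨q', hq', heq⟩ := ih f.divX hg
      set r := rightEval f.divX a with hr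
      have hfeq : f = X * f.divX + C (f.coeff 0) := by
        conv_lhs => rw [← divX_mul_X_add f]
        rw [X_mul]
      have hre : rightEval f a = a * r + f.coeff 0 := by
        conv_lhs => rw [hfeq]
        rw [rightEval_add, rightEval_X_mul, rightEval_C]
      refine ⟨X * q' + C r, ?_, ?_⟩
      · have h1 : (X * q').degree ≤ 1 + q'.degree := by
          calc (X * q').degree ≤ X.degree + q'.degree := degree_mul_le X q'
          _ = 1 + q'.degree := by rw [degree_X]
        have h2 : (X * q').degree < ((n + 1 : ℕ) : WithBot ℕ) := by
          refine lt_of_le_of_lt h1 ?_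
          rcases eq_or_ne q' 0 with rfl | hq0
          · rw [degree_zero]
            simpa using bot_lt_natCast (n + 1)
          · rw [degree_eq_natDegree hq0] at hq' ⊢
            have hn : q'.natDegree < n := by exact_mod_cast hq'
            rw [add_comm]
            exact_mod_cast Nat.succ_lt_succ hn
        have h3 : (C r).degree < ((n + 1 : ℕ) : WithBot ℕ) := by
          refine lt_of_le_of_lt degree_C_le ?_
          exact_mod_cast Nat.succ_pos n
        exact lt_of_le_of_lt (degree_add_le _ _) (max_lt h2 h3)
      · have hXc : (X - C a) * (X * q') = X * ((X - C a) * q') := by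
          rw [← mul_assoc, ← X_mul, mul_assoc]
        rw [hre]
        conv_lhs => rw [hfeq, heq]
        rw [mul_add X ((X - C a) * q') (C r), mul_add (X - C a) (X * q') (C r), hXc,
          sub_mul X (C a) (C r), ← C_mul, map_add]
        abel
end aux

/-- over a finite ring `A`, a polynomial of degree `< d` whose right
evaluation vanishes at `d` pairwise commuting points with unit pairwise differences
is the zero polynomial. -/
theorem stmt_19 {A : Type*} [Ring A] [Fintype A] {d : ℕ} (γ : Fin d → A)
    (hcomm : ∀ i j, γ i * γ j = γ j * γ i)
    (hdiff : ∀ i j, i ≠ j → IsUnit (γ i - γ j))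
    (f : A[X]) (hdeg : f.degree < (d : WithBot ℕ))
    (hvan : ∀ i, rightEval f (γ i) = 0) :
    f = 0 := by
  induction d generalizing f with
  | zero =>
      have hb : f.degree = ⊥ := by
        rw [Nat.cast_zero] at hdeg
        exact Nat.WithBot.lt_zero_iff.mp hdeg
      exact degree_eq_bot.mp hb
  | succ d ih =>
      set a := γ 0 with ha
      obtain ⟨q, hqdeg, heq⟩ := rightDiv a d f (by exact_mod_cast hdeg)
      rw [hvan 0, map_zero, add_zero] at heq
      have hq0 : q = 0 := by
        refine ih (fun i => γ i.succ) (fun i j => hcomm _ _) (fun i j hij => hdiff _ _ (by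
          simpa using fun h => hij (Fin.succ_injective _ h))) q hqdeg ?_
        intro i
        set b := γ i.succ with hb
        have hab : a * b = b * a := hcomm 0 i.succ
        have h1 : rightEval f b = (b - a) * rightEval q b := by
          rw [heq]; exact rightEval_X_sub_C_mul hab q
        have h2 : (b - a) * rightEval q b = 0 := by rw [← h1]; exact hvan i.succ
        have hu : IsUnit (b - a) := hdiff i.succ 0 (Fin.succ_ne_zero i)
        obtain ⟨u, hu⟩ := hu
        have h3 := congrArg (fun x => (↑u⁻¹ : A) * x) h2
        simpa [← hu, ← mul_assoc] using h3
      rw [heq, hq0, mul_zero]
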